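/- arXiv:1505.01956 — 5 statements merged into one kernel-verified Lean document; each statement's English description precedes it below -/
import Mathlib

section
/- Determination of the integration constant by the regularized boundary condition at the singular point: let f : [0,1] → ℂ be continuous, let c₁, c₂ ∈ ℂ, and define u(x) = c₁·x + c₂/x + ∫₁ˣ (x/2 − ξ²/(2x))·f(ξ) dξ for x ∈ (0,1]. Then u(x) converges to a finite limit as x → 0⁺ if and only if c₂ = −(1/2)·∫₀¹ ξ²·f(ξ) dξ, and in that case the limit is 0. -/
open Set Filter Topology intervalIntegral

/-- Determination of the integration constant by the regularized boundary
condition at the singular point: `u(x) = c₁·x + c₂/x + ∫₁ˣ (x/2 − ξ²/(2x))·f(ξ) dξ`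
has a finite limit as `x → 0⁺` iff `c₂ = −(1/2)·∫₀¹ ξ²·f(ξ) dξ`, in which case
the limit is `0`. -/
theorem integration_constant_from_regularized_bc
    (f : ℝ → ℂ) (hf : ContinuousOn f (Set.Icc (0:ℝ) 1))
    (c₁ c₂ : ℂ)
    (u : ℝ → ℂ)
    (hu : ∀ x ∈ Set.Ioc (0:ℝ) 1,
      u x = c₁ * (x:ℂ) + c₂ / (x:ℂ)
        + ∫ ξ in (1:ℝ)..x, ((x:ℂ)/2 - (ξ:ℂ)^2/(2*(x:ℂ))) * f ξ) :
    ((∃ L : ℂ, Tendsto u (𝓝[>] (0:ℝ)) (𝓝 L)) ↔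
      c₂ = -(1/2) * ∫ ξ in (0:ℝ)..1, (ξ:ℂ)^2 * f ξ) ∧
    (c₂ = -(1/2) * (∫ ξ in (0:ℝ)..1, (ξ:ℂ)^2 * f ξ) →
      Tendsto u (𝓝[>] (0:ℝ)) (𝓝 (0:ℂ))) := by
  obtain ⟨M, hM⟩ := isCompact_Icc.exists_bound_of_continuousOn hf
  have hM0 : 0 ≤ M := le_trans (norm_nonneg _) (hM 0 ⟨le_rfl, zero_le_one⟩)
  set A : ℂ := ∫ ξ in (0:ℝ)..1, (ξ:ℂ)^2 * f ξ with hA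
  set k : ℂ := c₂ + A/2 with hk
  have hg : ContinuousOn (fun ξ : ℝ => (ξ:ℂ)^2 * f ξ) (Icc 0 1) :=
    (Continuous.continuousOn (by continuity)).mul hf
  have hfint : ∀ a b : ℝ, a ∈ Icc (0:ℝ) 1 → b ∈ Icc (0:ℝ) 1 →
      IntervalIntegrable f MeasureTheory.volume a b := fun a b ha hb =>
    (hf.mono (uIcc_subset_Icc ha hb)).intervalIntegrable
  have hgint : ∀ a b : ℝ, a ∈ Icc (0:ℝ) 1 → b ∈ Icc (0:ℝ) 1 →
      IntervalIntegrable (fun ξ : ℝ => (ξ:ℂ)^2 * f ξ) MeasureTheory.volume a b :=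
    fun a b ha hb => (hg.mono (uIcc_subset_Icc ha hb)).intervalIntegrable
  have hmem : Ioo (0:ℝ) 1 ∈ 𝓝[>] (0:ℝ) := Ioo_mem_nhdsGT_of_mem ⟨le_rfl, one_pos⟩
  -- the main analytic fact
  have key : Tendsto (fun x : ℝ => u x - k / (x:ℂ)) (𝓝[>] (0:ℝ)) (𝓝 0) := by
    have heq : ∀ᶠ x in 𝓝[>] (0:ℝ), u x - k / (x:ℂ)
        = c₁ * x + ((x:ℂ)/2) * (∫ ξ in (1:ℝ)..x, f ξ)
          - (1/(2*(x:ℂ))) * (∫ ξ in (0:ℝ)..x, (ξ:ℂ)^2 * f ξ) := by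
      filter_upwards [hmem] with x hx
      have hx0 : (0:ℝ) < x := hx.1
      have hx1 : x ≤ 1 := hx.2.le
      have hxC : (x:ℂ) ≠ 0 := by exact_mod_cast hx0.ne'
      have hxI : x ∈ Icc (0:ℝ) 1 := ⟨hx0.le, hx1⟩
      rw [hu x ⟨hx0, hx1⟩]
      have hsplit : (∫ ξ in (1:ℝ)..x, ((x:ℂ)/2 - (ξ:ℂ)^2/(2*(x:ℂ))) * f ξ)
          = ((x:ℂ)/2) * (∫ ξ in (1:ℝ)..x, f ξ)
            - (1/(2*(x:ℂ))) * (∫ ξ in (1:ℝ)..x, (ξ:ℂ)^2 * f ξ) := by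
        rw [← intervalIntegral.integral_const_mul, ← intervalIntegral.integral_const_mul,
          ← intervalIntegral.integral_sub (((hfint 1 x (by norm_num) hxI).const_mul _))
            ((hgint 1 x (by norm_num) hxI).const_mul _)]
        apply intervalIntegral.integral_congr
        intro ξ _
        field_simp
      have hadd : A + (∫ ξ in (1:ℝ)..x, (ξ:ℂ)^2 * f ξ)
          = ∫ ξ in (0:ℝ)..x, (ξ:ℂ)^2 * f ξ :=
        intervalIntegral.integral_add_adjacent_intervals
          (hgint 0 1 (by norm_num) (by norm_num)) (hgint 1 x (by norm_num) hxI)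
      have h1x : (∫ ξ in (1:ℝ)..x, (ξ:ℂ)^2 * f ξ)
          = (∫ ξ in (0:ℝ)..x, (ξ:ℂ)^2 * f ξ) - A := by
        rw [← hadd]; ring
      rw [hsplit, h1x, hk]
      ring
    have htend : Tendsto (fun x : ℝ => c₁ * x + ((x:ℂ)/2) * (∫ ξ in (1:ℝ)..x, f ξ)
        - (1/(2*(x:ℂ))) * (∫ ξ in (0:ℝ)..x, (ξ:ℂ)^2 * f ξ)) (𝓝[>] (0:ℝ)) (𝓝 0) := by
      apply squeeze_zero_norm' (a := fun x : ℝ => ‖c₁‖ * x + M * x / 2 + M * x ^ 2 / 2)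
      · filter_upwards [hmem] with x hx
        have hx0 : (0:ℝ) < x := hx.1
        have hx1 : x < 1 := hx.2
        have hb1 : ‖∫ ξ in (1:ℝ)..x, f ξ‖ ≤ M * |x - 1| := by
          apply intervalIntegral.norm_integral_le_of_norm_le_const
          intro ξ hξ
          rw [Set.uIoc_of_ge hx1.le] at hξ
          exact hM ξ ⟨le_of_lt (lt_of_lt_of_le hx0 hξ.1.le), hξ.2⟩
        have hb2 : ‖∫ ξ in (0:ℝ)..x, (ξ:ℂ)^2 * f ξ‖ ≤ x ^ 2 * M * |x - 0| := by
          apply intervalIntegral.norm_integral_le_of_norm_le_const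
          intro ξ hξ
          rw [Set.uIoc_of_le hx0.le] at hξ
          have hξ0 : 0 < ξ := hξ.1
          have hξx : ξ ≤ x := hξ.2
          rw [norm_mul, norm_pow, Complex.norm_real, Real.norm_eq_abs,
            abs_of_pos hξ0]
          have hfb := hM ξ ⟨hξ0.le, hξx.trans hx1.le⟩
          have hsq : ξ ^ 2 ≤ x ^ 2 := by nlinarith
          nlinarith [mul_le_mul_of_nonneg_right hsq (norm_nonneg (f ξ)),
            mul_le_mul_of_nonneg_left hfb (sq_nonneg x)]
        have habs1 : |x - 1| ≤ 1 := by rw [abs_of_nonpos (by linarith)]; linarith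
        have habs2 : |x - 0| = x := by rw [sub_zero]; exact abs_of_pos hx0
        calc ‖c₁ * x + ((x:ℂ)/2) * (∫ ξ in (1:ℝ)..x, f ξ)
              - (1/(2*(x:ℂ))) * (∫ ξ in (0:ℝ)..x, (ξ:ℂ)^2 * f ξ)‖
            ≤ ‖c₁ * x + ((x:ℂ)/2) * (∫ ξ in (1:ℝ)..x, f ξ)‖
              + ‖(1/(2*(x:ℂ))) * (∫ ξ in (0:ℝ)..x, (ξ:ℂ)^2 * f ξ)‖ := norm_sub_le _ _
          _ ≤ ‖c₁ * x‖ + ‖((x:ℂ)/2) * (∫ ξ in (1:ℝ)..x, f ξ)‖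
              + ‖(1/(2*(x:ℂ))) * (∫ ξ in (0:ℝ)..x, (ξ:ℂ)^2 * f ξ)‖ := by
              gcongr; exact norm_add_le _ _
          _ ≤ ‖c₁‖ * x + M * x / 2 + M * x ^ 2 / 2 := by
              rw [norm_mul, norm_mul, norm_mul, norm_div, norm_div]
              simp only [Complex.norm_real, Real.norm_eq_abs, norm_one,
                Complex.norm_ofNat, norm_mul]
              rw [abs_of_pos hx0]
              have h1 : x / 2 * ‖∫ ξ in (1:ℝ)..x, f ξ‖ ≤ M * x / 2 := by
                have : ‖∫ ξ in (1:ℝ)..x, f ξ‖ ≤ M := le_trans hb1 (by nlinarith)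
                nlinarith [norm_nonneg (∫ ξ in (1:ℝ)..x, f ξ)]
              have h2 : 1 / (2 * x) * ‖∫ ξ in (0:ℝ)..x, (ξ:ℂ)^2 * f ξ‖
                  ≤ M * x ^ 2 / 2 := by
                rw [habs2] at hb2
                rw [div_mul_eq_mul_div, one_mul, div_le_div_iff₀ (by linarith) (by norm_num)]
                nlinarith [norm_nonneg (∫ ξ in (0:ℝ)..x, (ξ:ℂ)^2 * f ξ)]
              linarith
      · have hcont : Continuous (fun x : ℝ => ‖c₁‖ * x + M * x / 2 + M * x ^ 2 / 2) := by
          fun_prop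
        have h0 := hcont.tendsto 0
        rw [show ‖c₁‖ * (0:ℝ) + M * 0 / 2 + M * 0 ^ 2 / 2 = 0 by ring] at h0
        exact tendsto_nhdsWithin_of_tendsto_nhds h0
    exact Tendsto.congr' (heq.mono fun x h => h.symm) htend
  have hkzero_of_lim : (∃ L : ℂ, Tendsto u (𝓝[>] (0:ℝ)) (𝓝 L)) → k = 0 := by
    rintro ⟨L, hL⟩
    by_contra hk0
    have hkx : Tendsto (fun x : ℝ => k / (x:ℂ)) (𝓝[>] (0:ℝ)) (𝓝 L) := by
      have := hL.sub key
      simpa using this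
    have hnorm : Tendsto (fun x : ℝ => ‖k / (x:ℂ)‖) (𝓝[>] (0:ℝ)) (𝓝 ‖L‖) := hkx.norm
    have hat : Tendsto (fun x : ℝ => ‖k / (x:ℂ)‖) (𝓝[>] (0:ℝ)) atTop := by
      have h1 : Tendsto (fun x : ℝ => ‖k‖ * x⁻¹) (𝓝[>] (0:ℝ)) atTop :=
        tendsto_inv_nhdsGT_zero.const_mul_atTop (norm_pos_iff.mpr hk0)
      apply h1.congr'
      filter_upwards [hmem] with x hx
      rw [norm_div, Complex.norm_real, Real.norm_eq_abs, abs_of_pos hx.1,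
        div_eq_mul_inv]
    exact not_tendsto_atTop_of_tendsto_nhds hnorm hat
  have hpart2 : c₂ = -(1/2) * A → Tendsto u (𝓝[>] (0:ℝ)) (𝓝 (0:ℂ)) := by
    intro hc
    have hk0 : k = 0 := by rw [hk, hc]; ring
    rw [hk0] at key
    simpa using key
  refine ⟨⟨fun h => ?_, fun hc => ⟨0, hpart2 hc⟩⟩, hpart2⟩
  have hk0 := hkzero_of_lim h
  rw [hk] at hk0
  linear_combination hk0
end

section
/- The Green's function solves the singular two-point boundary problem: let f : [0,1] → ℂ be continuous and define g(x,ξ) = x·ξ²/2 − ξ²/(2x) for ξ ≤ x and g(x,ξ) = x·ξ²/2 − x/2 for ξ ≥ x (with x ∈ (0,1], ξ ∈ [0,1]). Then the function u(x) := ∫₀¹ g(x,ξ)·f(ξ) dξ is twice differentiable on (0,1] and satisfies u''(x) + (1/x)·u'(x) − (1/x²)·u(x) = f(x) for all x ∈ (0,1], together with the boundary conditions u(1) = 0 and u(x) → 0 as x → 0⁺. -/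
open Set Filter Topology intervalIntegral MeasureTheory

set_option maxHeartbeats 1000000 in
/-- The Green's function solves the singular two-point boundary problem:
with `g(x,ξ) = xξ²/2 − ξ²/(2x)` for `ξ ≤ x` and `g(x,ξ) = xξ²/2 − x/2` for
`ξ ≥ x`, the function `u(x) = ∫₀¹ g(x,ξ) f(ξ) dξ` is twice differentiable on
`(0,1]`, satisfies `u'' + (1/x)u' − (1/x²)u = f` there, and satisfies the
boundary conditions `u(1) = 0` and `u(x) → 0` as `x → 0⁺`. -/
theorem greens_function_solves_model
    (f : ℝ → ℂ) (hf : ContinuousOn f (Set.Icc (0:ℝ) 1))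
    (g : ℝ → ℝ → ℂ)
    (hg : ∀ x ∈ Set.Ioc (0:ℝ) 1, ∀ ξ ∈ Set.Icc (0:ℝ) 1,
      g x ξ = if ξ ≤ x then (x:ℂ)*(ξ:ℂ)^2/2 - (ξ:ℂ)^2/(2*(x:ℂ))
              else (x:ℂ)*(ξ:ℂ)^2/2 - (x:ℂ)/2)
    (u : ℝ → ℂ)
    (hu : ∀ x ∈ Set.Ioc (0:ℝ) 1, u x = ∫ ξ in (0:ℝ)..1, g x ξ * f ξ) :
    (∃ u' u'' : ℝ → ℂ,
      (∀ x ∈ Set.Ioc (0:ℝ) 1, HasDerivWithinAt u (u' x) (Set.Ioc (0:ℝ) 1) x) ∧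
      (∀ x ∈ Set.Ioc (0:ℝ) 1, HasDerivWithinAt u' (u'' x) (Set.Ioc (0:ℝ) 1) x) ∧
      (∀ x ∈ Set.Ioc (0:ℝ) 1,
        u'' x + (1/(x:ℂ)) * u' x - (1/(x:ℂ)^2) * u x = f x)) ∧
    u 1 = 0 ∧
    Tendsto u (𝓝[>] (0:ℝ)) (𝓝 (0:ℂ)) := by
  classical
  -- continuous extension of f to ℝ
  set fe : ℝ → ℂ := fun t => f ((Set.projIcc (0:ℝ) 1 zero_le_one t : Set.Icc (0:ℝ) 1) : ℝ)
    with hfe_def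
  have hfec : Continuous fe := by
    apply hf.comp_continuous (continuous_subtype_val.comp continuous_projIcc)
    intro t; exact (Set.projIcc (0:ℝ) 1 zero_le_one t).2
  have feq : ∀ t ∈ Set.Icc (0:ℝ) 1, fe t = f t := by
    intro t ht
    simp [hfe_def, Set.projIcc_of_mem zero_le_one ht]
  have hφA : Continuous (fun t : ℝ => (t:ℂ)^2 * fe t) :=
    (Complex.continuous_ofReal.pow 2).mul hfec
  have hφB : Continuous (fun t : ℝ => ((t:ℂ)^2 - 1) * fe t) :=
    ((Complex.continuous_ofReal.pow 2).sub continuous_const).mul hfec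
  set A : ℝ → ℂ := fun x => ∫ t in (0:ℝ)..x, (t:ℂ)^2 * fe t with hA_def
  set B : ℝ → ℂ := fun x => ∫ t in x..(1:ℝ), ((t:ℂ)^2 - 1) * fe t with hB_def
  have hA : ∀ x : ℝ, HasDerivAt A ((x:ℂ)^2 * fe x) x := fun x =>
    intervalIntegral.integral_hasDerivAt_right (hφA.intervalIntegrable _ _)
      (hφA.stronglyMeasurableAtFilter _ _) hφA.continuousAt
  have hB : ∀ x : ℝ, HasDerivAt B (-(((x:ℂ)^2 - 1) * fe x)) x := fun x =>
    intervalIntegral.integral_hasDerivAt_left (hφB.intervalIntegrable _ _)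
      (hφB.stronglyMeasurableAtFilter _ _) hφB.continuousAt
  have hAc : Continuous A := by
    rw [continuous_iff_continuousAt]; exact fun x => (hA x).continuousAt
  have hBc : Continuous B := by
    rw [continuous_iff_continuousAt]; exact fun x => (hB x).continuousAt
  have hcor : ∀ x : ℝ, HasDerivAt (fun y : ℝ => (y:ℂ)) 1 x := by
    intro x
    simpa using (hasDerivAt_id x).ofReal_comp
  -- u = explicit formula on (0,1]
  have hueq : ∀ x ∈ Set.Ioc (0:ℝ) 1,
      u x = ((x:ℂ)/2) * A x - A x/(2*(x:ℂ)) + ((x:ℂ)/2) * B x := by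
    intro x hx
    have hx0 : (x:ℂ) ≠ 0 := Complex.ofReal_ne_zero.mpr (ne_of_gt hx.1)
    rw [hu x hx]
    set c1 : ℂ := ((x:ℂ) - ((x:ℂ))⁻¹)/2 with hc1
    set G : ℝ → ℂ := fun ξ => if ξ ≤ x then c1 * ((ξ:ℂ)^2 * fe ξ)
        else ((x:ℂ)/2) * (((ξ:ℂ)^2 - 1) * fe ξ) with hG
    have hIcc : Set.uIcc (0:ℝ) 1 = Set.Icc 0 1 := Set.uIcc_of_le zero_le_one
    have h1 : (∫ ξ in (0:ℝ)..1, g x ξ * f ξ) = ∫ ξ in (0:ℝ)..1, G ξ := by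
      apply intervalIntegral.integral_congr
      intro ξ hξ
      rw [hIcc] at hξ
      show g x ξ * f ξ = G ξ
      rw [hg x hx ξ hξ, ← feq ξ hξ]
      by_cases hle : ξ ≤ x
      · simp only [hG, if_pos hle, hc1]
        field_simp
      · simp only [hG, if_neg hle]
        ring
    have i1 : IntervalIntegrable G volume 0 x := by
      have base : IntervalIntegrable (fun ξ : ℝ => c1 * ((ξ:ℂ)^2 * fe ξ)) volume 0 x :=
        ((continuous_const.mul hφA).intervalIntegrable _ _)
      apply base.congr
      rw [Set.uIoc_of_le (le_of_lt hx.1)]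
      intro ξ hξ
      simp [hG, hξ.2]
    have i2 : IntervalIntegrable G volume x 1 := by
      have base : IntervalIntegrable (fun ξ : ℝ => ((x:ℂ)/2) * (((ξ:ℂ)^2 - 1) * fe ξ)) volume x 1 :=
        ((continuous_const.mul hφB).intervalIntegrable _ _)
      apply base.congr
      rw [Set.uIoc_of_le hx.2]
      intro ξ hξ
      simp [hG, not_le.mpr hξ.1]
    have hsplit : (∫ ξ in (0:ℝ)..1, G ξ) = (∫ ξ in (0:ℝ)..x, G ξ) + ∫ ξ in x..(1:ℝ), G ξ :=
      (intervalIntegral.integral_add_adjacent_intervals i1 i2).symm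
    have e1 : (∫ ξ in (0:ℝ)..x, G ξ) = c1 * A x := by
      rw [hA_def, ← intervalIntegral.integral_const_mul]
      apply intervalIntegral.integral_congr
      intro ξ hξ
      rw [Set.uIcc_of_le (le_of_lt hx.1)] at hξ
      show G ξ = c1 * ((ξ:ℂ)^2 * fe ξ)
      simp [hG, hξ.2]
    have e2 : (∫ ξ in x..(1:ℝ), G ξ) = ((x:ℂ)/2) * B x := by
      rw [hB_def, ← intervalIntegral.integral_const_mul]
      apply intervalIntegral.integral_congr
      intro ξ hξ
      rw [Set.uIcc_of_le hx.2] at hξ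
      show G ξ = ((x:ℂ)/2) * (((ξ:ℂ)^2 - 1) * fe ξ)
      by_cases hle : ξ ≤ x
      · have : ξ = x := le_antisymm hle hξ.1
        subst this
        simp only [hG, if_pos le_rfl, hc1]
        field_simp
      · simp only [hG, if_neg hle]
    rw [h1, hsplit, e1, e2, hc1]
    field_simp
  -- first derivative
  have hD1 : ∀ x ∈ Set.Ioc (0:ℝ) 1,
      HasDerivAt (fun y : ℝ => ((y:ℂ)/2) * A y - A y/(2*(y:ℂ)) + ((y:ℂ)/2) * B y)
        (A x/2 + A x/(2*(x:ℂ)^2) + B x/2) x := by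
    intro x hx
    have hx0 : (x:ℂ) ≠ 0 := Complex.ofReal_ne_zero.mpr (ne_of_gt hx.1)
    have h2x : (2:ℂ)*(x:ℂ) ≠ 0 := by simp [hx0]
    have hd := (((((hcor x).div_const 2).mul (hA x)).sub
      ((hA x).div ((hcor x).const_mul 2) h2x)).add (((hcor x).div_const 2).mul (hB x)))
    convert hd using 1
    · rfl
    · rfl
    field_simp
    try ring_nf
    try simp [inv_pow]
    try field_simp
    try ring

  -- second derivative
  have hD2 : ∀ x ∈ Set.Ioc (0:ℝ) 1,
      HasDerivAt (fun y : ℝ => A y/2 + A y/(2*(y:ℂ)^2) + B y/2)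
        (-(A x)/(x:ℂ)^3 + fe x) x := by
    intro x hx
    have hx0 : (x:ℂ) ≠ 0 := Complex.ofReal_ne_zero.mpr (ne_of_gt hx.1)
    have hsq : HasDerivAt (fun y : ℝ => ((y:ℂ))^2) (2*(x:ℂ)) x := by
      have := (hasDerivAt_pow 2 ((x:ℝ):ℂ)).comp_ofReal
      simpa using this
    have h2x2 : (2:ℂ)*(x:ℂ)^2 ≠ 0 := by simp [hx0]
    have hd := ((((hA x).div_const 2).add
      ((hA x).div (hsq.const_mul 2) h2x2)).add ((hB x).div_const 2))
    convert hd using 1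
    · rfl
    · rfl
    field_simp
    try ring_nf
    try simp [inv_pow]
    try field_simp
    try ring
  refine ⟨⟨fun x => A x/2 + A x/(2*(x:ℂ)^2) + B x/2,
          fun x => -(A x)/(x:ℂ)^3 + fe x, ?_, ?_, ?_⟩, ?_, ?_⟩
  · intro x hx
    exact ((hD1 x hx).hasDerivWithinAt).congr (fun y hy => hueq y hy) (hueq x hx)
  · intro x hx
    exact (hD2 x hx).hasDerivWithinAt
  · intro x hx
    have hx0 : (x:ℂ) ≠ 0 := Complex.ofReal_ne_zero.mpr (ne_of_gt hx.1)
    rw [hueq x hx, ← feq x ⟨le_of_lt hx.1, hx.2⟩]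
    field_simp
    try ring_nf
    try simp [inv_pow]
    try field_simp
    try ring
  · rw [hu 1 ⟨zero_lt_one, le_refl 1⟩]
    rw [show (0:ℂ) = ∫ ξ in (0:ℝ)..1, (0:ℂ) by simp]
    apply intervalIntegral.integral_congr
    intro ξ hξ
    rw [Set.uIcc_of_le zero_le_one] at hξ
    show g 1 ξ * f ξ = 0
    rw [hg 1 ⟨zero_lt_one, le_refl 1⟩ ξ hξ, if_pos hξ.2]
    push_cast
    ring_nf
  · -- boundary behaviour at 0
    have hA0 : A 0 = 0 := intervalIntegral.integral_same
    have hslope : Tendsto (fun x : ℝ => ((x:ℂ))⁻¹ * A x) (𝓝[>] (0:ℝ)) (𝓝 0) := by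
      have h0 : HasDerivAt A 0 0 := by simpa using hA 0
      have ht := hasDerivAt_iff_tendsto_slope.mp h0
      have hmono : 𝓝[>] (0:ℝ) ≤ 𝓝[≠] (0:ℝ) :=
        nhdsWithin_mono 0 (fun y hy => ne_of_gt hy)
      refine ((ht.mono_left hmono).congr' ?_)
      filter_upwards [self_mem_nhdsWithin] with y hy
      have hy0 : (y:ℝ) ≠ 0 := ne_of_gt hy
      simp [slope, hA0, Complex.real_smul, Complex.ofReal_inv]
    have T1 : Tendsto (fun x : ℝ => ((x:ℂ))/2 * A x) (𝓝[>] (0:ℝ)) (𝓝 0) := by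
      have : Continuous fun x : ℝ => ((x:ℂ))/2 * A x :=
        (Complex.continuous_ofReal.div_const 2).mul hAc
      have := this.tendsto 0
      simp only [Complex.ofReal_zero, zero_div, zero_mul] at this
      exact this.mono_left nhdsWithin_le_nhds
    have T3 : Tendsto (fun x : ℝ => ((x:ℂ))/2 * B x) (𝓝[>] (0:ℝ)) (𝓝 0) := by
      have : Continuous fun x : ℝ => ((x:ℂ))/2 * B x :=
        (Complex.continuous_ofReal.div_const 2).mul hBc
      have := this.tendsto 0
      simp only [Complex.ofReal_zero, zero_div, zero_mul] at this
      exact this.mono_left nhdsWithin_le_nhds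
    have Tall : Tendsto
        (fun x : ℝ => ((x:ℂ))/2 * A x - (2:ℂ)⁻¹ * (((x:ℂ))⁻¹ * A x) + ((x:ℂ))/2 * B x)
        (𝓝[>] (0:ℝ)) (𝓝 0) := by
      have := (T1.sub (hslope.const_mul (2:ℂ)⁻¹)).add T3
      simpa using this
    refine Tall.congr' ?_
    filter_upwards [Ioc_mem_nhdsGT_of_mem (⟨le_refl 0, zero_lt_one⟩ : (0:ℝ) ∈ Set.Ico 0 1)]
      with x hx
    rw [hueq x hx]
    have hx0 : (x:ℂ) ≠ 0 := Complex.ofReal_ne_zero.mpr (ne_of_gt hx.1)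
    field_simp
    try ring_nf
    try simp [inv_pow]
    try field_simp
    try ring
end

section
/- Obstruction for Dirichlet boundary conditions in the second example: let f and u be complex-analytic on an open set containing [0,1], suppose u(0) = 0, u(1) = 0, and u''(x) + (4/x)·u'(x) + (2/x²)·u(x) = f(x) for all x ∈ (0,1]. Then the forcing function necessarily satisfies the constraint ∫₀¹ ξ²·(1−ξ)·f(ξ) dξ = 0. (Equivalently, writing f(x) = Σ_{n≥0} bₙ xⁿ, the coefficients satisfy Σ_{n≥0} bₙ/((n+3)(n+4)) = 0.) -/
open Set intervalIntegral

/-- Obstruction for Dirichlet boundary conditions in the second example: if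
`u` is analytic on a neighbourhood of `[0,1]` with `u(0) = u(1) = 0` and
`u'' + (4/x)u' + (2/x²)u = f` on `(0,1]` for an analytic forcing `f`, then
necessarily `∫₀¹ ξ²(1−ξ) f(ξ) dξ = 0`. -/
theorem second_example_dirichlet_obstruction
    (f u : ℝ → ℂ)
    (hf : AnalyticOnNhd ℝ f (Set.Icc (0:ℝ) 1))
    (hu : AnalyticOnNhd ℝ u (Set.Icc (0:ℝ) 1))
    (hu0 : u 0 = 0) (hu1 : u 1 = 0)
    (hode : ∀ x ∈ Set.Ioc (0:ℝ) 1,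
      deriv (deriv u) x + (4/(x:ℂ)) * deriv u x + (2/(x:ℂ)^2) * u x = f x) :
    ∫ ξ in (0:ℝ)..1, (ξ:ℂ)^2 * (1 - (ξ:ℂ)) * f ξ = 0 := by
  have hu' : AnalyticOnNhd ℝ (deriv u) (Set.Icc (0:ℝ) 1) := hu.deriv
  have hu'' : AnalyticOnNhd ℝ (deriv (deriv u)) (Set.Icc (0:ℝ) 1) := hu'.deriv
  -- derivative of the real→complex coercion
  have hcoe : ∀ x : ℝ, HasDerivAt (fun t : ℝ => (t:ℂ)) 1 x := by
    intro x
    simpa using! Complex.ofRealCLM.hasDerivAt (x := x)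
  set v' : ℝ → ℂ := fun x => 2*(x:ℂ)*u x + (x:ℂ)^2 * deriv u x with hv'
  set v'' : ℝ → ℂ := fun x => 2*u x + 4*(x:ℂ)*deriv u x + (x:ℂ)^2 * deriv (deriv u) x with hv''
  set F : ℝ → ℂ := fun x => (1 - (x:ℂ)) * v' x + (x:ℂ)^2 * u x with hF
  have hDF : ∀ x ∈ Set.Icc (0:ℝ) 1, HasDerivAt F ((1 - (x:ℂ)) * v'' x) x := by
    intro x hx
    have hux : HasDerivAt u (deriv u x) x := (hu x hx).differentiableAt.hasDerivAt
    have hux' : HasDerivAt (deriv u) (deriv (deriv u) x) x :=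
      (hu' x hx).differentiableAt.hasDerivAt
    have hsq : HasDerivAt (fun t : ℝ => (t:ℂ)^2) (2*(x:ℂ)) x := by
      simpa [sq, two_mul] using! (hcoe x).mul (hcoe x)
    have h1 : HasDerivAt (fun t : ℝ => (t:ℂ)^2 * u t) (v' x) x := by
      simpa [hv', mul_comm, mul_assoc, mul_left_comm] using! hsq.mul hux
    have h2 : HasDerivAt v' (v'' x) x := by
      have ha : HasDerivAt (fun t : ℝ => 2*(t:ℂ)*u t) (2*u x + 2*(x:ℂ)*deriv u x) x := by
        simpa [mul_comm, mul_assoc, mul_left_comm] using! ((hcoe x).const_mul (2:ℂ)).mul hux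
      have hb : HasDerivAt (fun t : ℝ => (t:ℂ)^2 * deriv u t)
          (2*(x:ℂ)*deriv u x + (x:ℂ)^2 * deriv (deriv u) x) x := hsq.mul hux'
      have := ha.add hb
      refine this.congr_deriv ?_
      simp [hv'']
      ring
    have hc : HasDerivAt (fun t : ℝ => (1 - (t:ℂ))) (-1) x := by
      simpa using! (hasDerivAt_const x (1:ℂ)).sub (hcoe x)
    have := (hc.mul h2).add h1
    refine this.congr_deriv ?_
    simp [hv', hv'']
    ring
  have hint : ∫ ξ in (0:ℝ)..1, (ξ:ℂ)^2 * (1 - (ξ:ℂ)) * f ξ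
      = ∫ ξ in (0:ℝ)..1, (1 - (ξ:ℂ)) * v'' ξ := by
    apply intervalIntegral.integral_congr
    intro x hx
    rw [Set.uIcc_of_le (by norm_num : (0:ℝ) ≤ 1)] at hx
    rcases eq_or_lt_of_le hx.1 with h0 | h0
    · simp [← h0, hv'', hu0]
    · have hxne : (x:ℂ) ≠ 0 := by exact_mod_cast ne_of_gt h0
      have := hode x ⟨h0, hx.2⟩
      dsimp only
      rw [← this]
      simp only [hv'']
      field_simp
      ring
  have hcont : ContinuousOn (fun x : ℝ => (1 - (x:ℂ)) * v'' x) (Set.Icc (0:ℝ) 1) := by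
    apply ContinuousOn.mul
    · fun_prop
    · apply ContinuousOn.add
      apply ContinuousOn.add
      · exact (hu.continuousOn).const_smul (2:ℂ) |>.congr (fun x _ => by simp [smul_eq_mul])
      · exact (ContinuousOn.mul (by fun_prop) (hu'.continuousOn))
      · exact (ContinuousOn.mul (by fun_prop) (hu''.continuousOn))
  rw [hint]
  have key : ∫ ξ in (0:ℝ)..1, (1 - (ξ:ℂ)) * v'' ξ = F 1 - F 0 := by
    apply intervalIntegral.integral_eq_sub_of_hasDerivAt
    · intro x hx
      exact hDF x (by rwa [Set.uIcc_of_le (by norm_num : (0:ℝ) ≤ 1)] at hx)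
    · exact (hcont.mono (by rw [Set.uIcc_of_le] <;> norm_num)).intervalIntegrable
  rw [key]
  simp [hF, hv', hu0, hu1]
end

section
/- Well-posedness of the second example with initial conditions: for every function f that is complex-analytic on an open set containing [0,1], there exists a unique function u, complex-analytic on an open set containing [0,1], such that u(0) = 0, u'(0) = 0, and u''(x) + (4/x)·u'(x) + (2/x²)·u(x) = f(x) for all x ∈ (0,1]. -/
open Set Filter Topology
open scoped ENNReal NNReal

lemma analyticAt_of_hasDerivAt {U : Set ℝ} (hU : IsOpen U) {f F : ℝ → ℂ}
    (hf : ∀ x ∈ U, AnalyticAt ℝ f x) (hF : ∀ x ∈ U, HasDerivAt F (f x) x)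
    {x₀ : ℝ} (hx₀ : x₀ ∈ U) : AnalyticAt ℝ F x₀ := by
  obtain ⟨p, hp0⟩ := hf x₀ hx₀
  obtain ⟨rp, hp⟩ := hp0
  obtain ⟨ε, hε, hball⟩ := Metric.isOpen_iff.1 hU x₀ hx₀
  obtain ⟨r, hr0, hrlt⟩ := ENNReal.lt_iff_exists_nnreal_btwn.mp
    (lt_min hp.r_pos (ENNReal.ofReal_pos.mpr hε))
  rw [lt_min_iff] at hrlt
  have hrpos : (0:ℝ) < r := by exact_mod_cast hr0
  have hrrp : (r : ℝ≥0∞) < rp := hrlt.1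
  have hrε : (r : ℝ) < ε := by
    have := hrlt.2
    rwa [ENNReal.lt_ofReal_iff_toReal_lt (by simp)] at this
  set s := Metric.ball x₀ (r:ℝ) with hs
  have hsU : s ⊆ U := fun y hy => hball (lt_trans hy hrε)
  have hsum : Summable (fun n => ‖p n‖ * (r:ℝ)^n) :=
    p.summable_norm_mul_pow (lt_of_lt_of_le hrrp hp.r_le)
  set c : ℕ → ℂ := p.coeff with hc
  set t : ℕ → ℝ → ℂ := fun n x => ((x - x₀)^(n+1)/((n:ℝ)+1)) • c n with ht_def
  set t' : ℕ → ℝ → ℂ := fun n x => ((x - x₀)^n : ℝ) • c n with ht'_def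
  have ht : ∀ (n : ℕ) (x : ℝ), HasDerivAt (t n) (t' n x) x := by
    intro n x
    have h1 : HasDerivAt (fun x : ℝ => (x - x₀)^(n+1)/((n:ℝ)+1)) ((x-x₀)^n) x := by
      have h2 := (((hasDerivAt_id x).sub_const x₀).pow (n+1)).div_const ((n:ℝ)+1)
      have : ((n:ℝ)+1) ≠ 0 := by positivity
      exact h2.congr_deriv (by simp only [id, Nat.add_sub_cancel, mul_one]; push_cast; field_simp)
    exact h1.smul_const (c n)
  have hbound : ∀ (n : ℕ), ∀ x ∈ s, ‖t' n x‖ ≤ ‖p n‖ * (r:ℝ)^n := by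
    intro n x hx
    have hxr : |x - x₀| ≤ (r:ℝ) := le_of_lt (by simpa [hs, Real.dist_eq] using hx)
    have : ‖t' n x‖ = |x - x₀|^n * ‖c n‖ := by
      rw [ht'_def, norm_smul, Real.norm_eq_abs, abs_pow]
    rw [this, FormalMultilinearSeries.norm_apply_eq_norm_coef, mul_comm]
    gcongr
  set G : ℝ → ℂ := fun x => ∑' n, t n x with hG_def
  have ht0 : ∀ n, t n x₀ = 0 := by intro n; simp [ht_def]
  have hG : ∀ x ∈ s, HasDerivAt G (f x) x := by
    intro x hx
    have h0 : Summable fun n => t n x₀ := by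
      apply summable_congr (f := fun _ => (0:ℂ)) (fun n => (ht0 n).symm) |>.mp summable_zero
    have key := hasDerivAt_tsum_of_isPreconnected hsum Metric.isOpen_ball
      (convex_ball x₀ (r:ℝ)).isPreconnected (fun n y _ => ht n y) hbound
      (Metric.mem_ball_self hrpos) h0 hx
    have hmem : (x - x₀) ∈ Metric.eball (0:ℝ) rp := by
      rw [Metric.mem_eball, edist_zero_right]
      refine lt_trans ?_ hrrp
      have h4 : ‖x - x₀‖₊ < r := by
        rw [← NNReal.coe_lt_coe]
        simpa [hs, Real.dist_eq] using hx
      exact_mod_cast h4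
    have hfx : HasSum (fun n => t' n x) (f x) := by
      have h3 := hp.hasSum hmem
      simp only [FormalMultilinearSeries.apply_eq_pow_smul_coeff, add_sub_cancel] at h3
      exact h3
    rwa [hfx.tsum_eq] at key
  -- continue
  have hFG : ∀ x ∈ s, F x = G x + F x₀ := by
    intro x hx
    have hd : ∀ y ∈ s, HasDerivWithinAt (fun y => F y - G y) (0:ℂ) s y := by
      intro y hy
      have := ((hF y (hsU hy)).sub (hG y hy))
      have h := this.hasDerivWithinAt (s := s)
      rw [sub_self] at h
      exact h
    have hb := Convex.norm_image_sub_le_of_norm_hasDerivWithin_le (C := 0) hd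
      (fun y _ => by simp) (convex_ball x₀ (r:ℝ)) (Metric.mem_ball_self hrpos) hx
    have hG0 : G x₀ = 0 := (tsum_congr ht0).trans tsum_zero
    rw [hG0, sub_zero, zero_mul] at hb
    have h5 : F x - G x - F x₀ = 0 := by
      have := norm_le_zero_iff.mp hb
      linear_combination this
    linear_combination h5
  have hb : ∀ n : ℕ, (fun m => (Nat.rec (F x₀) (fun n _ => (((n:ℝ)+1)⁻¹) • c n) m : ℂ)) (n+1) = (((n:ℝ)+1)⁻¹) • c n := fun n => rfl
  set b : ℕ → ℂ := fun m => (Nat.rec (F x₀) (fun n _ => (((n:ℝ)+1)⁻¹) • c n) m : ℂ) with hb_def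
  set Q : FormalMultilinearSeries ℝ ℝ ℂ :=
    fun m => ContinuousMultilinearMap.mkPiRing ℝ (Fin m) (b m) with hQ_def
  have hQc : ∀ m, Q.coeff m = b m := by
    intro m
    simp [hQ_def, FormalMultilinearSeries.coeff, ContinuousMultilinearMap.mkPiRing_apply]
  have hQn : ∀ m, ‖Q m‖ = ‖b m‖ := by
    intro m
    simp [hQ_def, ContinuousMultilinearMap.norm_mkPiRing]
  have hQr : (r : ℝ≥0∞) ≤ Q.radius := by
    apply FormalMultilinearSeries.le_radius_of_summable_norm
    apply (summable_nat_add_iff 1).mp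
    have hmaj : ∀ n : ℕ, ‖Q (n+1)‖ * (r:ℝ)^(n+1) ≤ (‖p n‖ * (r:ℝ)^n) * r := by
      intro n
      rw [hQn]
      have h1 : ‖b (n+1)‖ ≤ ‖p n‖ := by
        rw [hb n, norm_smul, Real.norm_eq_abs, FormalMultilinearSeries.norm_apply_eq_norm_coef]
        have hle : |((n:ℝ)+1)⁻¹| ≤ 1 := by
          rw [abs_of_nonneg (by positivity)]
          rw [inv_le_one_iff₀]
          right; linarith [Nat.cast_nonneg (α := ℝ) n]
        calc |((n:ℝ)+1)⁻¹| * ‖c n‖ ≤ 1 * ‖c n‖ := by gcongr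
          _ = ‖p.coeff n‖ := by rw [one_mul]
      calc ‖b (n+1)‖ * (r:ℝ)^(n+1) = (‖b (n+1)‖ * (r:ℝ)^n) * r := by ring
        _ ≤ (‖p n‖ * (r:ℝ)^n) * r := by gcongr
    exact Summable.of_nonneg_of_le (fun n => by positivity) hmaj (Summable.mul_right _ hsum)
  have hQpos : (0:ℝ≥0∞) < Q.radius := lt_of_lt_of_le hr0 hQr
  have hQs := Q.hasFPowerSeriesOnBall hQpos
  have hsum_eq : ∀ x ∈ s, Q.sum (x - x₀) = F x := by
    intro x hx
    have hmem : (x - x₀) ∈ Metric.eball (0:ℝ) Q.radius := by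
      rw [Metric.mem_eball, edist_zero_right]
      refine lt_of_lt_of_le ?_ hQr
      have h4 : ‖x - x₀‖₊ < r := by
        rw [← NNReal.coe_lt_coe]
        simpa [hs, Real.dist_eq] using hx
      exact_mod_cast h4
    have hhs : HasSum (fun m => ((x - x₀)^m : ℝ) • b m) (Q.sum (x-x₀)) := by
      have h6 := Q.hasSum hmem
      simp only [FormalMultilinearSeries.apply_eq_pow_smul_coeff, hQc] at h6
      exact h6
    have hsplit := Summable.tsum_eq_zero_add hhs.summable
    have hterm : ∀ n : ℕ, ((x - x₀)^(n+1) : ℝ) • b (n+1) = t n x := by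
      intro n
      rw [hb n, smul_smul, ht_def]
      simp only
      rw [div_eq_mul_inv]
    rw [← hhs.tsum_eq, hsplit]
    simp only [pow_zero, one_smul]
    rw [tsum_congr hterm]
    rw [hFG x hx]
    show F x₀ + G x = G x + F x₀
    ring
  have hQan : AnalyticAt ℝ (fun x => Q.sum (x - x₀)) x₀ := by
    have h1 : AnalyticAt ℝ Q.sum (x₀ - x₀) := by
      simpa using hQs.analyticAt
    have h2 : AnalyticAt ℝ (fun x : ℝ => x - x₀) x₀ := by
      exact analyticAt_id.sub analyticAt_const
    exact AnalyticAt.comp (g := Q.sum) (f := fun x : ℝ => x - x₀) h1 h2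
  refine hQan.congr ?_
  filter_upwards [Metric.ball_mem_nhds x₀ (by exact_mod_cast hrpos)] with x hx using hsum_eq x hx



open Set

/-- Well-posedness of the second example with initial conditions: for every
`f` analytic on a neighbourhood of `[0,1]` there is a function `u`, analytic
on a neighbourhood of `[0,1]`, with `u(0) = u'(0) = 0` and
`u'' + (4/x)u' + (2/x²)u = f` on `(0,1]`; it is unique on `[0,1]`. -/
theorem second_example_wellposed_initial_conditions
    (f : ℝ → ℂ) (hf : AnalyticOnNhd ℝ f (Set.Icc (0:ℝ) 1)) :
    ∃ u : ℝ → ℂ,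
      (AnalyticOnNhd ℝ u (Set.Icc (0:ℝ) 1) ∧ u 0 = 0 ∧ deriv u 0 = 0 ∧
        ∀ x ∈ Set.Ioc (0:ℝ) 1,
          deriv (deriv u) x + (4/(x:ℂ)) * deriv u x + (2/(x:ℂ)^2) * u x = f x) ∧
      ∀ v : ℝ → ℂ,
        (AnalyticOnNhd ℝ v (Set.Icc (0:ℝ) 1) ∧ v 0 = 0 ∧ deriv v 0 = 0 ∧
          ∀ x ∈ Set.Ioc (0:ℝ) 1,
            deriv (deriv v) x + (4/(x:ℂ)) * deriv v x + (2/(x:ℂ)^2) * v x = f x) →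
        Set.EqOn v u (Set.Icc (0:ℝ) 1) := by
  classical
  set U : Set ℝ := {x | AnalyticAt ℝ f x} with hU_def
  have hUopen : IsOpen U := isOpen_analyticAt ℝ f
  obtain ⟨δ, hδ, hthick⟩ := (isCompact_Icc (a := (0:ℝ)) (b := 1)).exists_thickening_subset_open hUopen hf
  set J : Set ℝ := Ioo (-δ) (1+δ) with hJ_def
  have hJU : J ⊆ U := by
    intro x hx
    apply hthick
    rw [Metric.mem_thickening_iff]
    rcases le_or_gt x 0 with h | h
    · exact ⟨0, by simp, by rw [Real.dist_eq]; rw [abs_of_nonpos (by linarith)]; linarith [hx.1]⟩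
    · rcases le_or_gt x 1 with h' | h'
      · exact ⟨x, ⟨le_of_lt h, h'⟩, by simp [hδ]⟩
      · exact ⟨1, by simp, by rw [Real.dist_eq, abs_of_nonneg (by linarith)]; linarith [hx.2]⟩
  have hJopen : IsOpen J := isOpen_Ioo
  have hIccJ : Icc (0:ℝ) 1 ⊆ J := fun x hx => ⟨by linarith [hx.1], by linarith [hx.2]⟩
  have h0J : (0:ℝ) ∈ J := hIccJ ⟨le_refl 0, zero_le_one⟩
  have hfa : ∀ x ∈ J, AnalyticAt ℝ f x := fun x hx => hJU hx
  have hJord : Set.OrdConnected J := Set.ordConnected_Ioo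
  -- the weighted function g = x^2 f
  set g : ℝ → ℂ := fun x => (x:ℂ)^2 * f x with hg_def
  have hga : ∀ x ∈ J, AnalyticAt ℝ g x := by
    intro x hx
    apply AnalyticAt.mul ?_ (hfa x hx)
    apply AnalyticAt.pow
    exact (Complex.ofRealCLM : ℝ →L[ℝ] ℂ).analyticAt x
  -- first primitive
  have primitive : ∀ w : ℝ → ℂ, (∀ x ∈ J, AnalyticAt ℝ w x) →
      (∀ x ∈ J, HasDerivAt (fun y => ∫ t in (0:ℝ)..y, w t) (w x) x) := by
    intro w hw x hx
    have hwc : ContinuousOn w J := fun y hy => ((hw y hy).continuousAt).continuousWithinAt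
    apply intervalIntegral.integral_hasDerivAt_right
    · exact (hwc.mono (hJord.uIcc_subset h0J hx)).intervalIntegrable
    · exact hwc.stronglyMeasurableAtFilter hJopen x hx
    · exact (hw x hx).continuousAt
  set F₀ : ℝ → ℂ := fun y => ∫ t in (0:ℝ)..y, g t with hF₀_def
  have hF₀d : ∀ x ∈ J, HasDerivAt F₀ (g x) x := primitive g hga
  have hF₀a : ∀ x ∈ J, AnalyticAt ℝ F₀ x :=
    fun x hx => analyticAt_of_hasDerivAt hJopen hga hF₀d hx
  set F₁ : ℝ → ℂ := fun y => ∫ t in (0:ℝ)..y, F₀ t with hF₁_def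
  have hF₁d : ∀ x ∈ J, HasDerivAt F₁ (F₀ x) x := primitive F₀ hF₀a
  have hF₁a : ∀ x ∈ J, AnalyticAt ℝ F₁ x :=
    fun x hx => analyticAt_of_hasDerivAt hJopen hF₀a hF₁d hx
  have hF₀0 : F₀ 0 = 0 := intervalIntegral.integral_same
  have hF₁0 : F₁ 0 = 0 := intervalIntegral.integral_same
  -- the solution
  set u : ℝ → ℂ := dslope (dslope F₁ 0) 0 with hu_def
  have hd0 : dslope F₁ 0 0 = 0 := by
    rw [dslope_same, (hF₁d 0 h0J).deriv, hF₀0]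
  have hdne : ∀ x : ℝ, x ≠ 0 → dslope F₁ 0 x = (x⁻¹ : ℝ) • F₁ x := by
    intro x hx
    rw [dslope_of_ne _ hx]
    simp [slope, hF₁0]
  have hx2u : ∀ x : ℝ, (x:ℂ)^2 * u x = F₁ x := by
    intro x
    by_cases hx : x = 0
    · subst hx; simp [hF₁0]
    · rw [hu_def, dslope_of_ne _ hx]
      simp only [slope, vsub_eq_sub, sub_zero, hd0, hdne x hx]
      rw [Complex.real_smul, Complex.real_smul]
      push_cast
      have hxc : (x:ℂ) ≠ 0 := Complex.ofReal_ne_zero.mpr hx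
      field_simp
  have hua : ∀ x ∈ J, AnalyticAt ℝ u x := by
    intro x hx
    by_cases hx0 : x = 0
    · subst hx0
      obtain ⟨p1, hp1⟩ := hF₁a 0 h0J
      exact ⟨_, hp1.has_fpower_series_dslope_fslope.has_fpower_series_dslope_fslope⟩
    · have hinv : AnalyticAt ℝ (fun y : ℝ => y⁻¹) x := analyticAt_id.inv hx0
      have hw : AnalyticAt ℝ (fun y : ℝ => (y⁻¹ : ℝ) • ((y⁻¹ : ℝ) • F₁ y)) x :=
        hinv.smul (hinv.smul (hF₁a x hx))
      apply hw.congr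
      filter_upwards [eventually_ne_nhds hx0] with y hy
      rw [hu_def, dslope_of_ne _ hy]
      simp only [slope, sub_zero, hd0, hdne y hy, sub_zero]
      simp
  have huIcc : AnalyticOnNhd ℝ u (Icc (0:ℝ) 1) := fun x hx => hua x (hIccJ hx)
  have hua' : ∀ x ∈ J, AnalyticAt ℝ (deriv u) x := AnalyticOnNhd.deriv hua
  have hua'' : ∀ x ∈ J, AnalyticAt ℝ (deriv (deriv u)) x := AnalyticOnNhd.deriv hua'
  have hud : ∀ x ∈ J, HasDerivAt u (deriv u x) x :=
    fun x hx => (hua x hx).differentiableAt.hasDerivAt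
  have hud' : ∀ x ∈ J, HasDerivAt (deriv u) (deriv (deriv u) x) x :=
    fun x hx => (hua' x hx).differentiableAt.hasDerivAt
  have hud'' : ∀ x ∈ J, HasDerivAt (deriv (deriv u)) (deriv (deriv (deriv u)) x) x :=
    fun x hx => (hua'' x hx).differentiableAt.hasDerivAt
  have hy2 : ∀ y : ℝ, HasDerivAt (fun z : ℝ => ((z:ℂ))^2) (2*(y:ℂ)) y := by
    intro y
    have h1 := (hasDerivAt_pow 2 ((y:ℝ):ℂ)).comp_ofReal
    have h2 : ((2:ℕ):ℂ) * (y:ℂ)^(2-1) = 2*(y:ℂ) := by push_cast; ring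
    rw [h2] at h1
    exact h1
  -- identify P1 = F₀ on J
  set P1 : ℝ → ℂ := fun y => 2*(y:ℂ)*u y + (y:ℂ)^2 * deriv u y with hP1_def
  have hF₁eq : F₁ = fun z : ℝ => (z:ℂ)^2 * u z := funext fun z => (hx2u z).symm
  have hP1F₀ : ∀ y ∈ J, P1 y = F₀ y := by
    intro y hy
    have h2 : HasDerivAt (fun z : ℝ => (z:ℂ)^2 * u z) (P1 y) y := by
      exact (hy2 y).mul (hud y hy)
    rw [← hF₁eq] at h2
    exact h2.unique (hF₁d y hy)
  -- second derivative identity U2 = y^2 f on J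
  set U2 : ℝ → ℂ := fun y => 2*u y + 4*(y:ℂ)*deriv u y + (y:ℂ)^2 * deriv (deriv u) y with hU2_def
  have hP1d : ∀ y ∈ J, HasDerivAt P1 (U2 y) y := by
    intro y hy
    have ha : HasDerivAt (fun z : ℝ => 2*(z:ℂ)*u z) (2*u y + 2*(y:ℂ)*deriv u y) y := by
      have h1 : HasDerivAt (fun z : ℝ => 2*(z:ℂ)) 2 y := by
        have h0 : HasDerivAt (fun z : ℝ => (z:ℂ)) 1 y := Complex.ofRealCLM.hasDerivAt
        simpa using h0.const_mul (2:ℂ)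
      have h2 := h1.mul (hud y hy)
      exact h2
    have hb : HasDerivAt (fun z : ℝ => (z:ℂ)^2 * deriv u z)
        (2*(y:ℂ)*deriv u y + (y:ℂ)^2 * deriv (deriv u) y) y := (hy2 y).mul (hud' y hy)
    have h3 := ha.add hb
    exact h3.congr_deriv (by simp only [hU2_def]; ring)
  have hU2eq : ∀ y ∈ J, U2 y = (y:ℂ)^2 * f y := by
    intro y hy
    have h3 : HasDerivAt F₀ (U2 y) y := by
      refine HasDerivAt.congr_of_eventuallyEq (hP1d y hy) ?_
      filter_upwards [hJopen.mem_nhds hy] with z hz using (hP1F₀ z hz).symm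
    exact h3.unique (hF₀d y hy)
  have hu0 : u 0 = 0 := by
    have := hU2eq 0 h0J
    rw [hU2_def] at this
    simp only [Complex.ofReal_zero] at this
    simpa using this
  have hdu0 : deriv u 0 = 0 := by
    have hr : HasDerivAt (fun y : ℝ => (y:ℂ)^2 * f y)
        (2*((0:ℝ):ℂ)*f 0 + ((0:ℝ):ℂ)^2 * deriv f 0) 0 :=
      (hy2 0).mul ((hfa 0 h0J).differentiableAt.hasDerivAt)
    have hl : HasDerivAt U2 (6 * deriv u 0) 0 := by
      have h1 : HasDerivAt (fun y : ℝ => 2*u y) (2*deriv u 0) 0 := (hud 0 h0J).const_mul 2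
      have h2 : HasDerivAt (fun y : ℝ => 4*(y:ℂ)*deriv u y)
          (4*deriv u 0 + 4*((0:ℝ):ℂ)*deriv (deriv u) 0) 0 := by
        have h4 : HasDerivAt (fun z : ℝ => 4*(z:ℂ)) 4 0 := by
          have h0 : HasDerivAt (fun z : ℝ => (z:ℂ)) 1 0 := Complex.ofRealCLM.hasDerivAt
          simpa using h0.const_mul (4:ℂ)
        have h5 := h4.mul (hud' 0 h0J)
        exact h5
      have h3 : HasDerivAt (fun y : ℝ => (y:ℂ)^2*deriv (deriv u) y)
          (2*((0:ℝ):ℂ)*deriv (deriv u) 0 + ((0:ℝ):ℂ)^2 * deriv (deriv (deriv u)) 0) 0 :=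
        (hy2 0).mul (hud'' 0 h0J)
      have hsum := (h1.add h2).add h3
      have heq : U2 = fun y => (2*u y + 4*(y:ℂ)*deriv u y) + (y:ℂ)^2*deriv (deriv u) y := by
        funext y; rw [hU2_def]
      rw [heq]
      exact hsum.congr_deriv (by push_cast; ring)
    have hUf : (fun y : ℝ => (y:ℂ)^2 * f y) =ᶠ[nhds (0:ℝ)] U2 := by
      filter_upwards [hJopen.mem_nhds h0J] with z hz using (hU2eq z hz).symm
    have huniq := (hl.congr_of_eventuallyEq hUf).unique hr
    have h6 : (6:ℂ) * deriv u 0 = 0 := by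
      rw [huniq]; push_cast; ring
    have h66 : (6:ℂ) ≠ 0 := by norm_num
    exact (mul_eq_zero.mp h6).resolve_left h66
  have hODE : ∀ x ∈ Ioc (0:ℝ) 1,
      deriv (deriv u) x + (4/(x:ℂ)) * deriv u x + (2/(x:ℂ)^2) * u x = f x := by
    intro x hx
    have hxJ : x ∈ J := hIccJ ⟨le_of_lt hx.1, hx.2⟩
    have h := hU2eq x hxJ
    rw [hU2_def] at h
    have hxc : (x:ℂ) ≠ 0 := Complex.ofReal_ne_zero.mpr (ne_of_gt hx.1)
    simp only at h
    field_simp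
    linear_combination h
  refine ⟨u, ⟨huIcc, hu0, hdu0, hODE⟩, ?_⟩
  rintro v ⟨hva, hv0, hdv0, hveq⟩
  set d : ℝ → ℂ := fun y => v y - u y with hd_def
  have h0I : (0:ℝ) ∈ Icc (0:ℝ) 1 := ⟨le_refl 0, zero_le_one⟩
  have h1I : (1:ℝ) ∈ Icc (0:ℝ) 1 := ⟨zero_le_one, le_refl 1⟩
  have hva' : ∀ x ∈ Icc (0:ℝ) 1, AnalyticAt ℝ (deriv v) x := AnalyticOnNhd.deriv hva
  have hvd : ∀ y ∈ Icc (0:ℝ) 1, HasDerivAt v (deriv v y) y :=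
    fun y hy => (hva y hy).differentiableAt.hasDerivAt
  have hvd' : ∀ y ∈ Icc (0:ℝ) 1, HasDerivAt (deriv v) (deriv (deriv v) y) y :=
    fun y hy => (hva' y hy).differentiableAt.hasDerivAt
  set H : ℝ → ℂ := fun y => (y:ℂ)^2 * d y with hH_def
  set H1 : ℝ → ℂ := fun y => 2*(y:ℂ)*d y + (y:ℂ)^2*(deriv v y - deriv u y) with hH1_def
  have hIoo : Ioo (0:ℝ) 1 ⊆ Icc 0 1 := Ioo_subset_Icc_self
  have hHd : ∀ y ∈ Icc (0:ℝ) 1, HasDerivAt H (H1 y) y := by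
    intro y hy
    exact (hy2 y).mul ((hvd y hy).sub (hud y (hIccJ hy)))
  have hH1d : ∀ x ∈ Ioo (0:ℝ) 1, HasDerivAt H1 0 x := by
    intro x hx
    have hxI : x ∈ Icc (0:ℝ) 1 := hIoo hx
    have hxc : (x:ℂ) ≠ 0 := Complex.ofReal_ne_zero.mpr (ne_of_gt hx.1)
    have ha : HasDerivAt (fun z : ℝ => 2*(z:ℂ)*d z)
        (2*d x + 2*(x:ℂ)*(deriv v x - deriv u x)) x := by
      have h1 : HasDerivAt (fun z : ℝ => 2*(z:ℂ)) 2 x := by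
        have h0 : HasDerivAt (fun z : ℝ => (z:ℂ)) 1 x := Complex.ofRealCLM.hasDerivAt
        simpa using h0.const_mul (2:ℂ)
      have h2 := h1.mul ((hvd x hxI).sub (hud x (hIccJ hxI)))
      exact h2
    have hb : HasDerivAt (fun z : ℝ => (z:ℂ)^2*(deriv v z - deriv u z))
        (2*(x:ℂ)*(deriv v x - deriv u x) + (x:ℂ)^2*(deriv (deriv v) x - deriv (deriv u) x)) x :=
      (hy2 x).mul ((hvd' x hxI).sub (hud' x (hIccJ hxI)))
    have h3 := ha.add hb
    have hxIoc : x ∈ Ioc (0:ℝ) 1 := ⟨hx.1, le_of_lt hx.2⟩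
    have hTv := hveq x hxIoc
    have hTu := hODE x hxIoc
    have key : 2*d x + 2*(x:ℂ)*(deriv v x - deriv u x)
        + (2*(x:ℂ)*(deriv v x - deriv u x) + (x:ℂ)^2*(deriv (deriv v) x - deriv (deriv u) x))
        = 0 := by
      field_simp at hTv hTu
      have key2 : (x:ℂ) * (2*d x + 2*(x:ℂ)*(deriv v x - deriv u x)
          + (2*(x:ℂ)*(deriv v x - deriv u x)
          + (x:ℂ)^2*(deriv (deriv v) x - deriv (deriv u) x))) = 0 := by
        rw [hd_def]
        linear_combination (x:ℂ) * (hTv - hTu)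
      exact (mul_eq_zero.mp key2).resolve_left hxc
    rw [key] at h3
    exact h3
  set a : ℂ := H1 (1/2 : ℝ) with ha_def
  have hhalf : (1/2 : ℝ) ∈ Ioo (0:ℝ) 1 := by norm_num
  have hH1const : ∀ x ∈ Ioo (0:ℝ) 1, H1 x = a := by
    intro x hx
    have hb := Convex.norm_image_sub_le_of_norm_hasDerivWithin_le (C := 0)
      (fun y hy => (hH1d y hy).hasDerivWithinAt) (fun y _ => by simp) (convex_Ioo 0 1) hhalf hx
    rw [zero_mul] at hb
    exact sub_eq_zero.mp (norm_le_zero_iff.mp hb)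
  set b : ℂ := H (1/2:ℝ) - a * ((1/2:ℝ):ℂ) with hb_def
  have hHaff : ∀ x ∈ Ioo (0:ℝ) 1, H x = a*(x:ℂ) + b := by
    intro x hx
    have hKd : ∀ y ∈ Ioo (0:ℝ) 1,
        HasDerivWithinAt (fun y : ℝ => H y - a*(y:ℂ)) 0 (Ioo (0:ℝ) 1) y := by
      intro y hy
      have h1 : HasDerivAt (fun y : ℝ => a*(y:ℂ)) a y := by
        have h0 : HasDerivAt (fun z : ℝ => (z:ℂ)) 1 y := Complex.ofRealCLM.hasDerivAt
        simpa using h0.const_mul a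
      have h2 := (hHd y (hIoo hy)).sub h1
      rw [hH1const y hy] at h2
      have h3 := h2.hasDerivWithinAt (s := Ioo (0:ℝ) 1)
      rw [sub_self] at h3
      exact h3
    have hb2 := Convex.norm_image_sub_le_of_norm_hasDerivWithin_le (C := 0)
      hKd (fun y _ => by simp) (convex_Ioo 0 1) hhalf hx
    rw [zero_mul] at hb2
    have h3 := sub_eq_zero.mp (norm_le_zero_iff.mp hb2)
    rw [hb_def]
    linear_combination h3
  have hIooCl0 : (0:ℝ) ∈ closure (Ioo (0:ℝ) 1) := by
    rw [closure_Ioo (by norm_num : (0:ℝ) ≠ 1)]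
    exact h0I
  have hne : (nhdsWithin (0:ℝ) (Ioo (0:ℝ) 1)).NeBot := mem_closure_iff_nhdsWithin_neBot.mp hIooCl0
  have hdc0 : ContinuousAt d 0 :=
    ((hva 0 h0I).sub (hua 0 h0J)).continuousAt
  have hd00 : d 0 = 0 := by rw [hd_def]; simp [hv0, hu0]
  have hHc : Filter.Tendsto H (nhdsWithin (0:ℝ) (Ioo (0:ℝ) 1)) (nhds 0) := by
    have hc : ContinuousAt H 0 := ((Complex.continuous_ofReal.pow 2).continuousAt).mul hdc0
    have h4 := hc.continuousWithinAt (s := Ioo (0:ℝ) 1)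
    have hH0 : H 0 = 0 := by rw [hH_def]; simp
    rw [ContinuousWithinAt, hH0] at h4
    exact h4
  have hlin : Filter.Tendsto (fun y : ℝ => a*(y:ℂ) + b) (nhdsWithin (0:ℝ) (Ioo (0:ℝ) 1)) (nhds b) := by
    have hc : ContinuousAt (fun y : ℝ => a*(y:ℂ) + b) 0 := by
      exact ((continuous_const.mul Complex.continuous_ofReal).add continuous_const).continuousAt
    have h5 := hc.continuousWithinAt (s := Ioo (0:ℝ) 1)
    rw [ContinuousWithinAt] at h5
    simpa using h5
  have hb0 : b = 0 := by
    have h6 : Filter.Tendsto H (nhdsWithin (0:ℝ) (Ioo (0:ℝ) 1)) (nhds b) := by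
      refine hlin.congr' ?_
      filter_upwards [self_mem_nhdsWithin] with y hy using (hHaff y hy).symm
    exact (tendsto_nhds_unique h6 hHc)
  have hxd : ∀ x ∈ Ioo (0:ℝ) 1, (x:ℂ) * d x = a := by
    intro x hx
    have hxc : (x:ℂ) ≠ 0 := Complex.ofReal_ne_zero.mpr (ne_of_gt hx.1)
    have h7 := hHaff x hx
    rw [hb0, add_zero, hH_def] at h7
    have h8 : ((x:ℂ) * d x) * (x:ℂ) = a * (x:ℂ) := by linear_combination h7
    exact mul_right_cancel₀ hxc h8
  have ha0 : a = 0 := by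
    have h8 : Filter.Tendsto (fun x : ℝ => (x:ℂ) * d x) (nhdsWithin (0:ℝ) (Ioo (0:ℝ) 1)) (nhds 0) := by
      have hc : ContinuousAt (fun x : ℝ => (x:ℂ) * d x) 0 :=
        (Complex.continuous_ofReal.continuousAt).mul hdc0
      have h9 := hc.continuousWithinAt (s := Ioo (0:ℝ) 1)
      rw [ContinuousWithinAt] at h9
      simpa [hd00] using h9
    have h10 : Filter.Tendsto (fun x : ℝ => (x:ℂ) * d x) (nhdsWithin (0:ℝ) (Ioo (0:ℝ) 1)) (nhds a) := by
      refine tendsto_const_nhds.congr' ?_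
      filter_upwards [self_mem_nhdsWithin] with y hy using (hxd y hy).symm
    exact tendsto_nhds_unique h10 h8
  have hdIoo : ∀ x ∈ Ioo (0:ℝ) 1, d x = 0 := by
    intro x hx
    have hxc : (x:ℂ) ≠ 0 := Complex.ofReal_ne_zero.mpr (ne_of_gt hx.1)
    have h11 := hxd x hx
    rw [ha0] at h11
    exact (mul_eq_zero.mp h11).resolve_left hxc
  have hd1 : d 1 = 0 := by
    have hIooCl1 : (1:ℝ) ∈ closure (Ioo (0:ℝ) 1) := by
      rw [closure_Ioo (by norm_num : (0:ℝ) ≠ 1)]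
      exact h1I
    have hne1 : (nhdsWithin (1:ℝ) (Ioo (0:ℝ) 1)).NeBot := mem_closure_iff_nhdsWithin_neBot.mp hIooCl1
    have hc1 : ContinuousAt d 1 := ((hva 1 h1I).sub (hua 1 (hIccJ h1I))).continuousAt
    have h10 : Filter.Tendsto d (nhdsWithin (1:ℝ) (Ioo (0:ℝ) 1)) (nhds (d 1)) :=
      hc1.continuousWithinAt
    have h11 : Filter.Tendsto d (nhdsWithin (1:ℝ) (Ioo (0:ℝ) 1)) (nhds 0) := by
      refine tendsto_const_nhds.congr' ?_
      filter_upwards [self_mem_nhdsWithin] with y hy using (hdIoo y hy).symm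
    exact tendsto_nhds_unique h10 h11
  intro x hx
  have hdx : d x = 0 := by
    rcases eq_or_lt_of_le hx.1 with h0 | h0
    · rw [← h0]; exact hd00
    · rcases eq_or_lt_of_le hx.2 with h1 | h1
      · rw [h1]; exact hd1
      · exact hdIoo x ⟨h0, h1⟩
  have : v x - u x = 0 := hdx
  exact sub_eq_zero.mp this
end

section
/- Triangular basis with strictly increasing orders (content of Lemma 1 in the Hahn series model): let K be a field and let u₁, …, uₙ be linearly independent elements of the ring of Hahn series over K with real exponents (formal series Σ a_e x^e with well-ordered support in ℝ). Then there exist a basis v₁, …, vₙ of the K-linear span of u₁, …, uₙ and real numbers e₁ < e₂ < ⋯ < eₙ such that for each i the order of vᵢ is eᵢ with leading coefficient 1 (the coefficient of x^{eᵢ} in vᵢ is 1), and the coefficient of x^{eᵢ} in vⱼ is 0 for all j > i; in particular the matrix of coefficients (coeff_{eᵢ}(vⱼ))_{i,j} is lower unitriangular. -/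
open HahnSeries Submodule

section aux

variable {K : Type*} [Field K]

/-- Families of Hahn series with pairwise distinct leading exponents are
linearly independent. -/
lemma lindep_of_distinct_lead {n : ℕ} (v : Fin n → HahnSeries ℝ K) (e : Fin n → ℝ)
    (he : Function.Injective e) (h1 : ∀ i, (v i).coeff (e i) = 1)
    (h0 : ∀ i, ∀ x < e i, (v i).coeff x = 0) : LinearIndependent K v := by
  classical
  rw [Fintype.linearIndependent_iff]
  intro g hg
  by_contra hc
  push_neg at hc
  obtain ⟨i, hi⟩ := hc
  have hs : (Finset.univ.filter (fun i => g i ≠ 0)).Nonempty := ⟨i, by simp [hi]⟩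
  obtain ⟨i₀, hi₀mem, hi₀min⟩ := Finset.exists_min_image _ e hs
  have hg0 : g i₀ ≠ 0 := by simpa using (Finset.mem_filter.mp hi₀mem).2
  have hkey : (∑ j, g j • v j).coeff (e i₀) = g i₀ := by
    rw [show (∑ j, g j • v j).coeff (e i₀)
        = ∑ j, ((g j • v j).coeff (e i₀)) from map_sum (coeff.addMonoidHom (e i₀)) _ _]
    rw [Finset.sum_eq_single i₀]
    · rw [coeff_smul, h1, smul_eq_mul, mul_one]
    · intro j _ hj
      rw [coeff_smul]
      by_cases hgj : g j = 0
      · simp [hgj]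
      · have hjm : j ∈ Finset.univ.filter (fun i => g i ≠ 0) := by simp [hgj]
        have hlt : e i₀ < e j := (hi₀min j hjm).lt_of_ne (fun h => hj (he h).symm)
        rw [h0 j _ hlt, smul_zero]
    · intro h; exact absurd (Finset.mem_univ i₀) h
  rw [hg, HahnSeries.coeff_zero] at hkey
  exact hg0 hkey.symm

/-- Main construction: an unsorted triangular basis. -/
lemma exists_distinct_lead_basis : ∀ (n : ℕ) (u : Fin n → HahnSeries ℝ K),
    LinearIndependent K u →
    ∃ (v : Fin n → HahnSeries ℝ K) (e : Fin n → ℝ),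
      LinearIndependent K v ∧
      Submodule.span K (Set.range v) = Submodule.span K (Set.range u) ∧
      Function.Injective e ∧
      (∀ i, (v i).coeff (e i) = 1) ∧
      (∀ i, ∀ x < e i, (v i).coeff x = 0) := by
  classical
  intro n
  induction n with
  | zero =>
    intro u _
    refine ⟨fun i => i.elim0, fun i => i.elim0, ?_, ?_, ?_, ?_, ?_⟩
    · exact linearIndependent_empty_type
    · congr 1; rw [Set.range_eq_empty, Set.range_eq_empty]
    · intro a; exact a.elim0
    · intro a; exact a.elim0
    · intro a; exact a.elim0
  | succ n ih =>
    intro u hu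
    obtain ⟨v, e, hvind, hvspan, hinj, h1, h0⟩ :=
      ih (u ∘ Fin.castSucc) (hu.comp _ (Fin.castSucc_injective n))
    have hvsub : ∀ j, v j ∈ span K (Set.range u) := by
      intro j
      have : v j ∈ span K (Set.range (u ∘ Fin.castSucc)) :=
        hvspan ▸ subset_span (Set.mem_range_self j)
      refine span_mono ?_ this
      rintro x ⟨i, rfl⟩; exact Set.mem_range_self _
    -- the last vector is not in the span of the previous ones
    have hlast : u (Fin.last n) ∉ span K (Set.range v) := by
      rw [hvspan]
      have hrange : Set.range (u ∘ Fin.castSucc) = u '' {i | i ≠ Fin.last n} := by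
        ext x
        constructor
        · rintro ⟨i, rfl⟩
          exact ⟨Fin.castSucc i, fun h => (Fin.castSucc_lt_last i).ne h, rfl⟩
        · rintro ⟨i, hi, rfl⟩
          have : i < Fin.last n := lt_of_le_of_ne (Fin.le_last i) hi
          exact ⟨i.castLT (Fin.lt_iff_val_lt_val.mp this), by simp [Fin.castSucc_castLT]⟩
      rw [hrange]
      exact hu.notMem_span_image (by simp)
    -- inner recursion: produce an element whose leading exponent avoids all `e i`
    have claim : ∀ (k : ℕ) (z : HahnSeries ℝ K), z ∈ span K (Set.range u) →
        z ∉ span K (Set.range v) →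
        (Finset.univ.filter (fun i => ¬ e i < z.order)).card ≤ k →
        ∃ (w : HahnSeries ℝ K) (f : ℝ), w ∈ span K (Set.range u) ∧
          w ∉ span K (Set.range v) ∧
          (∀ i, f ≠ e i) ∧ w.coeff f = 1 ∧ (∀ x < f, w.coeff x = 0) := by
      intro k
      induction k with
      | zero =>
        intro z hz hz' hcard
        have hz0 : z ≠ 0 := fun h => hz' (h ▸ zero_mem _)
        by_cases hex : ∃ i, z.order = e i
        · obtain ⟨i, hi⟩ := hex
          exfalso
          have : i ∈ Finset.univ.filter (fun i => ¬ e i < z.order) := by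
            simp [hi]
          have := Finset.card_pos.mpr ⟨i, this⟩
          omega
        · push_neg at hex
          set c := z.coeff z.order with hc
          have hc0 : c ≠ 0 := (coeff_order_eq_zero.not.mpr hz0)
          refine ⟨c⁻¹ • z, z.order, smul_mem _ _ hz, ?_, hex, ?_, ?_⟩
          · intro h
            exact hz' (by simpa [smul_smul, mul_inv_cancel₀ hc0] using smul_mem _ c h)
          · rw [coeff_smul, ← hc, smul_eq_mul, inv_mul_cancel₀ hc0]
          · intro x hx
            rw [coeff_smul, coeff_eq_zero_of_lt_order hx, smul_zero]
      | succ k ihk =>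
        intro z hz hz' hcard
        have hz0 : z ≠ 0 := fun h => hz' (h ▸ zero_mem _)
        by_cases hex : ∃ i, z.order = e i
        · obtain ⟨i, hi⟩ := hex
          set w := z - z.coeff (e i) • v i with hw
          have hwmem : w ∈ span K (Set.range u) :=
            sub_mem hz (smul_mem _ _ (hvsub i))
          have hwnot : w ∉ span K (Set.range v) := by
            intro h
            apply hz'
            have : z = w + z.coeff (e i) • v i := by rw [hw]; ring
            rw [this]
            exact add_mem h (smul_mem _ _ (subset_span (Set.mem_range_self i)))
          have hw0 : w ≠ 0 := fun h => hwnot (h ▸ zero_mem _)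
          have hcoeffle : ∀ x ≤ e i, w.coeff x = 0 := by
            intro x hx
            rcases lt_or_eq_of_le hx with hlt | rfl
            · rw [hw, coeff_sub, coeff_smul, h0 i x hlt, smul_zero, sub_zero,
                coeff_eq_zero_of_lt_order (hi ▸ hlt)]
            · rw [hw, coeff_sub, coeff_smul, h1 i, smul_eq_mul, mul_one, sub_self]
          have hord : e i < w.order := by
            by_contra hle
            push_neg at hle
            exact (coeff_order_eq_zero.not.mpr hw0) (hcoeffle _ hle)
          have hss : (Finset.univ.filter (fun j => ¬ e j < w.order)) ⊂
              (Finset.univ.filter (fun j => ¬ e j < z.order)) := by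
            constructor
            · intro j hj
              simp only [Finset.mem_filter, Finset.mem_univ, true_and] at hj ⊢
              intro hlt
              exact hj (hlt.trans_le (by rw [hi]; exact hord.le))
            · intro hsub
              have hi2 : i ∈ Finset.univ.filter (fun j => ¬ e j < z.order) := by
                simp [hi]
              have := hsub hi2
              simp only [Finset.mem_filter, Finset.mem_univ, true_and] at this
              exact this hord
          have := Finset.card_lt_card hss
          exact ihk w hwmem hwnot (by omega)
        · push_neg at hex
          set c := z.coeff z.order with hc
          have hc0 : c ≠ 0 := (coeff_order_eq_zero.not.mpr hz0)
          refine ⟨c⁻¹ • z, z.order, smul_mem _ _ hz, ?_, hex, ?_, ?_⟩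
          · intro h
            exact hz' (by simpa [smul_smul, mul_inv_cancel₀ hc0] using smul_mem _ c h)
          · rw [coeff_smul, ← hc, smul_eq_mul, inv_mul_cancel₀ hc0]
          · intro x hx
            rw [coeff_smul, coeff_eq_zero_of_lt_order hx, smul_zero]
    obtain ⟨w, f, hwmem, hwnot, hf, hw1, hw0⟩ :=
      claim _ (u (Fin.last n)) (subset_span (Set.mem_range_self _)) hlast le_rfl
    have hinj' : Function.Injective (Fin.snoc e f : Fin (n+1) → ℝ) := by
      intro a b hab
      induction a using Fin.lastCases with
      | last =>
        induction b using Fin.lastCases with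
        | last => rfl
        | cast b =>
          rw [Fin.snoc_last, Fin.snoc_castSucc] at hab
          exact absurd hab (hf b)
      | cast a =>
        induction b using Fin.lastCases with
        | last =>
          rw [Fin.snoc_last, Fin.snoc_castSucc] at hab
          exact absurd hab.symm (hf a)
        | cast b =>
          rw [Fin.snoc_castSucc, Fin.snoc_castSucc] at hab
          rw [hinj hab]
    have h1' : ∀ i, ((Fin.snoc v w : Fin (n+1) → HahnSeries ℝ K) i).coeff
        ((Fin.snoc e f : Fin (n+1) → ℝ) i) = 1 := by
      intro i
      induction i using Fin.lastCases with
      | last => rw [Fin.snoc_last, Fin.snoc_last]; exact hw1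
      | cast i => rw [Fin.snoc_castSucc, Fin.snoc_castSucc]; exact h1 i
    have h0' : ∀ i, ∀ x < (Fin.snoc e f : Fin (n+1) → ℝ) i,
        ((Fin.snoc v w : Fin (n+1) → HahnSeries ℝ K) i).coeff x = 0 := by
      intro i
      induction i using Fin.lastCases with
      | last => rw [Fin.snoc_last, Fin.snoc_last]; exact hw0
      | cast i => rw [Fin.snoc_castSucc, Fin.snoc_castSucc]; exact h0 i
    have hind' : LinearIndependent K (Fin.snoc v w : Fin (n+1) → HahnSeries ℝ K) :=
      lindep_of_distinct_lead _ _ hinj' h1' h0'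
    have hle : span K (Set.range (Fin.snoc v w : Fin (n+1) → HahnSeries ℝ K)) ≤
        span K (Set.range u) := by
      rw [span_le]
      rintro x ⟨i, rfl⟩
      induction i using Fin.lastCases with
      | last => rw [Fin.snoc_last]; exact hwmem
      | cast i => rw [Fin.snoc_castSucc]; exact hvsub i
    have hfin : FiniteDimensional K (span K (Set.range u)) :=
      FiniteDimensional.span_of_finite K (Set.finite_range u)
    have hspan' : span K (Set.range (Fin.snoc v w : Fin (n+1) → HahnSeries ℝ K)) =
        span K (Set.range u) := by
      apply Submodule.eq_of_le_of_finrank_le hle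
      rw [finrank_span_eq_card hu, finrank_span_eq_card hind']
    exact ⟨_, _, hind', hspan', hinj', h1', h0'⟩

end aux

/-- Triangular basis with strictly increasing orders (content of Lemma 1 in
the Hahn series model): linearly independent Hahn series `u₁, …, uₙ` over a
field `K` with real exponents admit a basis `v₁, …, vₙ` of their span and
exponents `e₁ < ⋯ < eₙ` such that each `vᵢ` has order `eᵢ` with leading
coefficient `1`, and the coefficient of `x^{eᵢ}` in `vⱼ` vanishes for `j > i`
(so the coefficient matrix is lower unitriangular). -/
theorem triangular_basis_hahn_series
    {K : Type*} [Field K] {n : ℕ}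
    (u : Fin n → HahnSeries ℝ K) (hu : LinearIndependent K u) :
    ∃ (v : Fin n → HahnSeries ℝ K) (e : Fin n → ℝ),
      LinearIndependent K v ∧
      Submodule.span K (Set.range v) = Submodule.span K (Set.range u) ∧
      StrictMono e ∧
      (∀ i, (v i).coeff (e i) = 1) ∧
      (∀ i, ∀ x < e i, (v i).coeff x = 0) ∧
      (∀ i j, i < j → (v j).coeff (e i) = 0) := by
  obtain ⟨v, e, hvind, hvspan, hinj, h1, h0⟩ := exists_distinct_lead_basis n u hu
  set σ := Tuple.sort e with hσ
  have hmono : StrictMono (e ∘ σ) :=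
    (Tuple.monotone_sort e).strictMono_of_injective (hinj.comp σ.injective)
  refine ⟨v ∘ σ, e ∘ σ, hvind.comp σ σ.injective, ?_, hmono, fun i => h1 (σ i),
    fun i x hx => h0 (σ i) x hx, ?_⟩
  · rw [σ.surjective.range_comp v, hvspan]
  · intro i j hij
    exact h0 (σ j) _ (hmono hij)
end
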